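/- Let R be a reverse homogeneous step bisimulation between stable configuration structures C and D, and suppose M ∈ C_C with min(M) = M, N ∈ C_D with min(N) = N, and R(M, N). Then the relation R_{M,N} = { (X \ M, Y \ N) : R(X, Y), min(X) = M, min(Y) = N } is a reverse homogeneous step bisimulation between the liftings C_M and D_N. -/

import Mathlib

universe u v

/-- A configuration structure over event type `E` and label alphabet `L`:
a family of finite sets of events (configurations) with a labelling. -/
structure CS (E : Type u) (L : Type v) where
  C : Set (Set E)
  finite : ∀ X ∈ C, X.Finite
  label : E → L

namespace CS

variable {E E₁ E₂ : Type u} {L : Type v}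

/-- Stability: rooted, connected, closed under bounded unions and intersections. -/
def IsStable (𝒞 : CS E L) : Prop :=
  ∅ ∈ 𝒞.C ∧
  (∀ X ∈ 𝒞.C, X ≠ ∅ → ∃ e ∈ X, X \ {e} ∈ 𝒞.C) ∧
  (∀ X ∈ 𝒞.C, ∀ Y ∈ 𝒞.C, ∀ Z ∈ 𝒞.C, X ∪ Y ⊆ Z → X ∪ Y ∈ 𝒞.C) ∧
  (∀ X ∈ 𝒞.C, ∀ Y ∈ 𝒞.C, ∀ Z ∈ 𝒞.C, X ∪ Y ⊆ Z → X ∩ Y ∈ 𝒞.C)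

/-- Causality: `d ≤_X e` iff every sub-configuration of `X` containing `e` contains `d`. -/
def le (𝒞 : CS E L) (X : Set E) (d e : E) : Prop :=
  ∀ Y ∈ 𝒞.C, Y ⊆ X → e ∈ Y → d ∈ Y

/-- Strict causality `d <_X e`. -/
def lt (𝒞 : CS E L) (X : Set E) (d e : E) : Prop :=
  le 𝒞 X d e ∧ d ≠ e

/-- Concurrency within a configuration. -/
def co (𝒞 : CS E L) (X : Set E) (d e : E) : Prop :=
  ¬ lt 𝒞 X d e ∧ ¬ lt 𝒞 X e d

/-- The set of minimal events of a configuration. -/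
def minE (𝒞 : CS E L) (X : Set E) : Set E :=
  {e | e ∈ X ∧ ∀ d ∈ X, ¬ lt 𝒞 X d e}

/-- Depth of an event in a configuration: the length of the longest
causal chain (w.r.t. `<_X`) in `X` up to and including `e`. -/
noncomputable def depth (𝒞 : CS E L) (X : Set E) (e : E) : ℕ :=
  sSup {n | ∃ l : List E, l.length = n ∧ l.Chain' (lt 𝒞 X) ∧
    (∀ x ∈ l, x ∈ X) ∧ l.getLast? = some e}

/-- Multiset of labels of a (finite) set of events. -/
noncomputable def labelMS (𝒞 : CS E L) (S : Set E) : Multiset L := by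
  classical exact if h : S.Finite then h.toFinset.val.map 𝒞.label else 0

/-- Single-event forward transition `X —a→ X'`. -/
def FTrans (𝒞 : CS E L) (a : L) (X X' : Set E) : Prop :=
  X ∈ 𝒞.C ∧ X' ∈ 𝒞.C ∧ X ⊆ X' ∧ ∃ e, X' \ X = {e} ∧ 𝒞.label e = a

/-- Single-event reverse transition `X ⇝a X'`. -/
def RTrans (𝒞 : CS E L) (a : L) (X X' : Set E) : Prop :=
  FTrans 𝒞 a X' X

/-- Step transition `X —A→ X'`: the added events are pairwise concurrent
in `X'` and carry the label multiset `A`. -/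
def Step (𝒞 : CS E L) (A : Multiset L) (X X' : Set E) : Prop :=
  X ∈ 𝒞.C ∧ X' ∈ 𝒞.C ∧ X ⊆ X' ∧ ∃ F : Finset E, ↑F = X' \ X ∧
    (∀ d ∈ F, ∀ e ∈ F, co 𝒞 X' d e) ∧ F.val.map 𝒞.label = A

/-- Reverse step transition `X ⇝A X'`. -/
def RStep (𝒞 : CS E L) (A : Multiset L) (X X' : Set E) : Prop :=
  Step 𝒞 A X' X

/-- Equidepth step: all added events have the same depth in `X'`. -/
def EqStep (𝒞 : CS E L) (A : Multiset L) (X X' : Set E) : Prop :=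
  Step 𝒞 A X X' ∧ ∀ d ∈ X' \ X, ∀ e ∈ X' \ X, depth 𝒞 X' d = depth 𝒞 X' e

/-- Reverse equidepth step `X ⇝A= X'`. -/
def REqStep (𝒞 : CS E L) (A : Multiset L) (X X' : Set E) : Prop :=
  EqStep 𝒞 A X' X

/-- Single-event forward transition with depth: the new event has label `a`
and depth `k` in `X'`. -/
def FTransD (𝒞 : CS E L) (a : L) (k : ℕ) (X X' : Set E) : Prop :=
  X ∈ 𝒞.C ∧ X' ∈ 𝒞.C ∧ X ⊆ X' ∧
    ∃ e, X' \ X = {e} ∧ 𝒞.label e = a ∧ depth 𝒞 X' e = k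

/-- Single-event reverse transition with depth. -/
def RTransD (𝒞 : CS E L) (a : L) (k : ℕ) (X X' : Set E) : Prop :=
  FTransD 𝒞 a k X' X

/-- A multiset of labels is homogeneous if all its elements are equal. -/
def Hom (A : Multiset L) : Prop := ∀ a ∈ A, ∀ b ∈ A, a = b

/-- `R` is a relation between configurations of `𝒞` and `𝒟`, containing `(∅, ∅)`. -/
def Dom (𝒞 : CS E₁ L) (𝒟 : CS E₂ L) (R : Set E₁ → Set E₂ → Prop) : Prop :=
  R ∅ ∅ ∧ ∀ X Y, R X Y → X ∈ 𝒞.C ∧ Y ∈ 𝒟.C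

/-- Interleaving bisimulation. -/
def IsIB (𝒞 : CS E₁ L) (𝒟 : CS E₂ L) (R : Set E₁ → Set E₂ → Prop) : Prop :=
  Dom 𝒞 𝒟 R ∧ ∀ X Y, R X Y →
    (∀ a X', FTrans 𝒞 a X X' → ∃ Y', FTrans 𝒟 a Y Y' ∧ R X' Y') ∧
    (∀ a Y', FTrans 𝒟 a Y Y' → ∃ X', FTrans 𝒞 a X X' ∧ R X' Y')

/-- Reverse bisimulation: an IB also matching reverse single-event transitions. -/
def IsRB (𝒞 : CS E₁ L) (𝒟 : CS E₂ L) (R : Set E₁ → Set E₂ → Prop) : Prop :=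
  IsIB 𝒞 𝒟 R ∧ ∀ X Y, R X Y →
    (∀ a X', RTrans 𝒞 a X X' → ∃ Y', RTrans 𝒟 a Y Y' ∧ R X' Y') ∧
    (∀ a Y', RTrans 𝒟 a Y Y' → ∃ X', RTrans 𝒞 a X X' ∧ R X' Y')

/-- Step bisimulation. -/
def IsSB (𝒞 : CS E₁ L) (𝒟 : CS E₂ L) (R : Set E₁ → Set E₂ → Prop) : Prop :=
  Dom 𝒞 𝒟 R ∧ ∀ X Y, R X Y →
    (∀ A X', Step 𝒞 A X X' → ∃ Y', Step 𝒟 A Y Y' ∧ R X' Y') ∧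
    (∀ A Y', Step 𝒟 A Y Y' → ∃ X', Step 𝒞 A X X' ∧ R X' Y')

/-- Reverse step bisimulation: an SB also matching reverse steps. -/
def IsRSB (𝒞 : CS E₁ L) (𝒟 : CS E₂ L) (R : Set E₁ → Set E₂ → Prop) : Prop :=
  IsSB 𝒞 𝒟 R ∧ ∀ X Y, R X Y →
    (∀ A X', RStep 𝒞 A X X' → ∃ Y', RStep 𝒟 A Y Y' ∧ R X' Y') ∧
    (∀ A Y', RStep 𝒟 A Y Y' → ∃ X', RStep 𝒞 A X X' ∧ R X' Y')

/-- Reverse homogeneous step bisimulation: matches forward single-event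
transitions and reverse homogeneous steps. -/
def IsRHSB (𝒞 : CS E₁ L) (𝒟 : CS E₂ L) (R : Set E₁ → Set E₂ → Prop) : Prop :=
  Dom 𝒞 𝒟 R ∧ ∀ X Y, R X Y →
    (∀ a X', FTrans 𝒞 a X X' → ∃ Y', FTrans 𝒟 a Y Y' ∧ R X' Y') ∧
    (∀ a Y', FTrans 𝒟 a Y Y' → ∃ X', FTrans 𝒞 a X X' ∧ R X' Y') ∧
    (∀ A X', Hom A → RStep 𝒞 A X X' → ∃ Y', RStep 𝒟 A Y Y' ∧ R X' Y') ∧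
    (∀ A Y', Hom A → RStep 𝒟 A Y Y' → ∃ X', RStep 𝒞 A X X' ∧ R X' Y')

/-- Reverse homogeneous equidepth step bisimulation. -/
def IsRHESB (𝒞 : CS E₁ L) (𝒟 : CS E₂ L) (R : Set E₁ → Set E₂ → Prop) : Prop :=
  Dom 𝒞 𝒟 R ∧ ∀ X Y, R X Y →
    (∀ a X', FTrans 𝒞 a X X' → ∃ Y', FTrans 𝒟 a Y Y' ∧ R X' Y') ∧
    (∀ a Y', FTrans 𝒟 a Y Y' → ∃ X', FTrans 𝒞 a X X' ∧ R X' Y') ∧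
    (∀ A X', Hom A → REqStep 𝒞 A X X' → ∃ Y', REqStep 𝒟 A Y Y' ∧ R X' Y') ∧
    (∀ A Y', Hom A → REqStep 𝒟 A Y Y' → ∃ X', REqStep 𝒞 A X X' ∧ R X' Y')

/-- Depth-respecting bisimulation. -/
def IsDB (𝒞 : CS E₁ L) (𝒟 : CS E₂ L) (R : Set E₁ → Set E₂ → Prop) : Prop :=
  Dom 𝒞 𝒟 R ∧ ∀ X Y, R X Y →
    (∀ a k X', FTransD 𝒞 a k X X' → ∃ Y', FTransD 𝒟 a k Y Y' ∧ R X' Y') ∧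
    (∀ a k Y', FTransD 𝒟 a k Y Y' → ∃ X', FTransD 𝒞 a k X X' ∧ R X' Y')

/-- Reverse depth-respecting bisimulation. -/
def IsRDB (𝒞 : CS E₁ L) (𝒟 : CS E₂ L) (R : Set E₁ → Set E₂ → Prop) : Prop :=
  IsDB 𝒞 𝒟 R ∧ ∀ X Y, R X Y →
    (∀ a k X', RTransD 𝒞 a k X X' → ∃ Y', RTransD 𝒟 a k Y Y' ∧ R X' Y') ∧
    (∀ a k Y', RTransD 𝒟 a k Y Y' → ∃ X', RTransD 𝒞 a k X X' ∧ R X' Y')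

/-- The lifting of a configuration structure w.r.t. a configuration `M`. -/
def lift (𝒞 : CS E L) (M : Set E) : CS E L where
  C := {Z | ∃ X, X ∈ 𝒞.C ∧ M ⊆ X ∧ minE 𝒞 X = minE 𝒞 M ∧ Z = X \ M}
  finite := by
    rintro Z ⟨X, hX, -, -, rfl⟩
    exact (𝒞.finite X hX).subset Set.diff_subset
  label := 𝒞.label

/-- Events of `X` of depth at most `n`. -/
def levelLe (𝒞 : CS E L) (X : Set E) (n : ℕ) : Set E :=
  {e | e ∈ X ∧ depth 𝒞 X e ≤ n}

/-- Events of `X` of depth exactly `n`. -/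
def levelEq (𝒞 : CS E L) (X : Set E) (n : ℕ) : Set E :=
  {e | e ∈ X ∧ depth 𝒞 X e = n}

/-- No equidepth auto-concurrency: distinct concurrent events never share
both label and depth. -/
def NoEqAC (𝒞 : CS E L) : Prop :=
  ∀ X ∈ 𝒞.C, ∀ d ∈ X, ∀ e ∈ X, co 𝒞 X d e → 𝒞.label d = 𝒞.label e →
    depth 𝒞 X d = depth 𝒞 X e → d = e

/-- `f` (a set of pairs) is a label- and order-preserving isomorphism
between configurations `X` and `Y`. -/
def IsIso (𝒞 : CS E₁ L) (𝒟 : CS E₂ L) (X : Set E₁) (Y : Set E₂)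
    (f : Set (E₁ × E₂)) : Prop :=
  (∀ p ∈ f, p.1 ∈ X ∧ p.2 ∈ Y) ∧
  (∀ d ∈ X, ∃! e, (d, e) ∈ f) ∧
  (∀ e ∈ Y, ∃! d, (d, e) ∈ f) ∧
  (∀ p ∈ f, 𝒞.label p.1 = 𝒟.label p.2) ∧
  (∀ p ∈ f, ∀ q ∈ f, (lt 𝒞 X p.1 q.1 ↔ lt 𝒟 Y p.2 q.2))

/-- Hereditary history-preserving bisimulation. -/
def IsHH (𝒞 : CS E₁ L) (𝒟 : CS E₂ L)
    (R : Set (Set E₁ × Set E₂ × Set (E₁ × E₂))) : Prop :=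
  (∅, ∅, ∅) ∈ R ∧
  ∀ X Y f, (X, Y, f) ∈ R →
    X ∈ 𝒞.C ∧ Y ∈ 𝒟.C ∧ IsIso 𝒞 𝒟 X Y f ∧
    (∀ a X', FTrans 𝒞 a X X' → ∃ Y' f', FTrans 𝒟 a Y Y' ∧
      (X', Y', f') ∈ R ∧ {p ∈ f' | p.1 ∈ X} = f) ∧
    (∀ a Y', FTrans 𝒟 a Y Y' → ∃ X' f', FTrans 𝒞 a X X' ∧
      (X', Y', f') ∈ R ∧ {p ∈ f' | p.1 ∈ X} = f) ∧
    (∀ a X', RTrans 𝒞 a X X' → ∃ Y' f', RTrans 𝒟 a Y Y' ∧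
      (X', Y', f') ∈ R ∧ {p ∈ f | p.1 ∈ X'} = f')

end CS

open CS

namespace Stmt6Aux

variable {E : Type u} {L : Type v}

theorem le_refl' (𝒞 : CS E L) (X : Set E) (e : E) : le 𝒞 X e e :=
  fun _ _ _ he => he

theorem le_trans' {𝒞 : CS E L} {X : Set E} {c d e : E}
    (h1 : le 𝒞 X c d) (h2 : le 𝒞 X d e) : le 𝒞 X c e :=
  fun Y hY hYX heY => h1 Y hY hYX (h2 Y hY hYX heY)

theorem mem_of_le {𝒞 : CS E L} {X : Set E} {d e : E}
    (hX : X ∈ 𝒞.C) (he : e ∈ X) (h : le 𝒞 X d e) : d ∈ X :=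
  h X hX subset_rfl he

theorem not_lt_self {𝒞 : CS E L} {X : Set E} (e : E) : ¬ lt 𝒞 X e e :=
  fun h => h.2 rfl

def cone (𝒞 : CS E L) (X : Set E) (e : E) : Set E := {d | le 𝒞 X d e}

theorem cone_subset {𝒞 : CS E L} {X : Set E} {e : E} (hX : X ∈ 𝒞.C) (he : e ∈ X) :
    cone 𝒞 X e ⊆ X := fun _ hd => mem_of_le hX he hd

theorem mem_cone_self (𝒞 : CS E L) (X : Set E) (e : E) : e ∈ cone 𝒞 X e := le_refl' 𝒞 X e

theorem cone_mem {𝒞 : CS E L} (h : IsStable 𝒞) {X : Set E} (hX : X ∈ 𝒞.C) {e : E}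
    (he : e ∈ X) : cone 𝒞 X e ∈ 𝒞.C := by
  classical
  have hfinX := 𝒞.finite X hX
  set T : Set ℕ := {n | ∃ Z, (Z ∈ 𝒞.C ∧ Z ⊆ X ∧ e ∈ Z) ∧ Z.ncard = n} with hT
  have hTne : T.Nonempty := ⟨X.ncard, X, ⟨hX, subset_rfl, he⟩, rfl⟩
  obtain ⟨Z₀, ⟨hZ₀C, hZ₀X, heZ₀⟩, hZ₀n⟩ := Nat.sInf_mem hTne
  have hmin : ∀ Z, Z ∈ 𝒞.C → Z ⊆ X → e ∈ Z → Z₀ ⊆ Z := by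
    intro Z hZC hZX heZ
    have hint : Z₀ ∩ Z ∈ 𝒞.C := h.2.2.2 Z₀ hZ₀C Z hZC X hX (Set.union_subset hZ₀X hZX)
    have h1 : sInf T ≤ (Z₀ ∩ Z).ncard :=
      Nat.sInf_le ⟨Z₀ ∩ Z, ⟨hint, Set.inter_subset_left.trans hZ₀X, ⟨heZ₀, heZ⟩⟩, rfl⟩
    have h2 : Z₀ ∩ Z = Z₀ :=
      Set.eq_of_subset_of_ncard_le Set.inter_subset_left (hZ₀n ▸ h1) (hfinX.subset hZ₀X)
    intro x hx
    rw [← h2] at hx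
    exact hx.2
  have hcone : cone 𝒞 X e = Z₀ := by
    apply Set.Subset.antisymm
    · intro d hd; exact hd Z₀ hZ₀C hZ₀X heZ₀
    · intro z hz Y hY hYX heY; exact hmin Y hY hYX heY hz
  rw [hcone]; exact hZ₀C

def LC (𝒞 : CS E L) (X A : Set E) : Prop := ∀ e ∈ A, ∀ d, le 𝒞 X d e → d ∈ A

theorem lc_mem {𝒞 : CS E L} (h : IsStable 𝒞) {X A : Set E} (hX : X ∈ 𝒞.C)
    (hAX : A ⊆ X) (hlc : LC 𝒞 X A) : A ∈ 𝒞.C := by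
  classical
  have hfinX := 𝒞.finite X hX
  have hfinA := hfinX.subset hAX
  have key : ∀ s : Finset E, ↑s ⊆ A →
      (⋃ e ∈ (s : Set E), cone 𝒞 X e) ∈ 𝒞.C ∧ (⋃ e ∈ (s : Set E), cone 𝒞 X e) ⊆ X := by
    intro s
    induction s using Finset.induction with
    | empty =>
      intro _
      constructor
      · simpa using h.1
      · simp
    | @insert a s' ha ih =>
      intro hsub
      have haA : a ∈ A := hsub (by simp)
      have hrest : (s' : Set E) ⊆ A := fun x hx => hsub (by simp [hx])
      obtain ⟨h1, h2⟩ := ih hrest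
      have hconeC := cone_mem h hX (hAX haA)
      have hconesub := cone_subset hX (hAX haA)
      rw [Finset.coe_insert, Set.biUnion_insert]
      exact ⟨h.2.2.1 _ hconeC _ h1 X hX (Set.union_subset hconesub h2),
        Set.union_subset hconesub h2⟩
  have hAeq : (⋃ e ∈ (hfinA.toFinset : Set E), cone 𝒞 X e) = A := by
    rw [hfinA.coe_toFinset]
    ext x
    simp only [Set.mem_iUnion, exists_prop]
    constructor
    · rintro ⟨e, heA, hle⟩; exact hlc e heA x hle
    · intro hx; exact ⟨x, hx, mem_cone_self 𝒞 X x⟩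
  rw [← hAeq]
  exact (key hfinA.toFinset (by rw [hfinA.coe_toFinset])).1

theorem le_agree {𝒞 : CS E L} (h : IsStable 𝒞) {X Y : Set E} (hX : X ∈ 𝒞.C) (hY : Y ∈ 𝒞.C)
    (hYX : Y ⊆ X) {d e : E} (he : e ∈ Y) : le 𝒞 Y d e ↔ le 𝒞 X d e := by
  constructor
  · intro hle Z hZ hZX heZ
    have hint : Z ∩ Y ∈ 𝒞.C := h.2.2.2 Z hZ Y hY X hX (Set.union_subset hZX hYX)
    exact (hle (Z ∩ Y) hint Set.inter_subset_right ⟨heZ, he⟩).1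
  · intro hle Z hZ hZY heZ
    exact hle Z hZ (hZY.trans hYX) heZ

theorem minE_mono {𝒞 : CS E L} {Y Y₂ : Set E} (hY : Y ∈ 𝒞.C) (hsub : Y ⊆ Y₂) :
    minE 𝒞 Y ⊆ minE 𝒞 Y₂ := by
  rintro m ⟨hmY, hmin⟩
  refine ⟨hsub hmY, fun c hc hlt => ?_⟩
  have hcY : c ∈ Y := hlt.1 Y hY hsub hmY
  exact hmin c hcY ⟨fun Z hZ hZY hmZ => hlt.1 Z hZ (hZY.trans hsub) hmZ, hlt.2⟩

theorem minE_inter_subset {𝒞 : CS E L} (h : IsStable 𝒞) {Y Y₂ : Set E}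
    (hY : Y ∈ 𝒞.C) (hY₂ : Y₂ ∈ 𝒞.C) (hsub : Y ⊆ Y₂) :
    minE 𝒞 Y₂ ∩ Y ⊆ minE 𝒞 Y := by
  rintro m ⟨⟨hmY₂, hmin⟩, hmY⟩
  refine ⟨hmY, fun c hc hlt => ?_⟩
  exact hmin c (hsub hc) ⟨(le_agree h hY₂ hY hsub hmY).1 hlt.1, hlt.2⟩

/-- configurations contained in a configuration: `minE` restricts. -/
theorem minE_subcfg {𝒞 : CS E L} (h : IsStable 𝒞) {Y Y₂ : Set E}
    (hY : Y ∈ 𝒞.C) (hY₂ : Y₂ ∈ 𝒞.C) (hsub : Y₂ ⊆ Y) :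
    minE 𝒞 Y₂ = minE 𝒞 Y ∩ Y₂ := by
  apply Set.Subset.antisymm
  · rintro m ⟨hmY₂, hmin⟩
    refine ⟨⟨hsub hmY₂, fun c hcY hlt => ?_⟩, hmY₂⟩
    have hcY₂ : c ∈ Y₂ := hlt.1 Y₂ hY₂ hsub hmY₂
    exact hmin c hcY₂ ⟨(le_agree h hY hY₂ hsub hmY₂).mpr hlt.1, hlt.2⟩
  · exact minE_inter_subset h hY₂ hY hsub

theorem le_antisym {𝒞 : CS E L} (h : IsStable 𝒞) {X : Set E} (hX : X ∈ 𝒞.C) {d e : E}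
    (he : e ∈ X) (h1 : le 𝒞 X d e) (h2 : le 𝒞 X e d) : d = e := by
  by_contra hne
  have hconeC := cone_mem h hX he
  have hconesub := cone_subset hX he
  obtain ⟨c, hc, hcC⟩ := h.2.1 _ hconeC (Set.Nonempty.ne_empty ⟨e, mem_cone_self 𝒞 X e⟩)
  by_cases heZ : e ∈ cone 𝒞 X e \ {c}
  · have hsub2 : cone 𝒞 X e ⊆ cone 𝒞 X e \ {c} := fun z hz =>
      hz _ hcC (Set.diff_subset.trans hconesub) heZ
    exact (hsub2 hc).2 rfl
  · have hce : c = e := by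
      by_contra hce
      exact heZ ⟨mem_cone_self 𝒞 X e, fun hmem => hce (Set.mem_singleton_iff.mp hmem).symm⟩
    rw [hce] at hcC
    have hdZ : d ∈ cone 𝒞 X e \ {e} := ⟨h1, fun hmem => hne (Set.mem_singleton_iff.mp hmem)⟩
    have : e ∈ cone 𝒞 X e \ {e} := h2 _ hcC (Set.diff_subset.trans hconesub) hdZ
    exact this.2 rfl

theorem lc_of_subset_minE {𝒞 : CS E L} {X S : Set E} (hX : X ∈ 𝒞.C)
    (hS : S ⊆ minE 𝒞 X) : LC 𝒞 X S := by
  intro e heS d hled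
  rcases eq_or_ne d e with rfl | hne
  · exact heS
  · exact absurd (show lt 𝒞 X d e from ⟨hled, hne⟩)
      ((hS heS).2 d (mem_of_le hX (hS heS).1 hled))

theorem subset_minE_mem {𝒞 : CS E L} (h : IsStable 𝒞) {X S : Set E} (hX : X ∈ 𝒞.C)
    (hS : S ⊆ minE 𝒞 X) : S ∈ 𝒞.C :=
  lc_mem h hX (fun x hx => (hS hx).1) (lc_of_subset_minE hX hS)

theorem subset_minE_of_co {𝒞 : CS E L} (h : IsStable 𝒞) {X Z : Set E} (hX : X ∈ 𝒞.C)
    (hZ : Z ∈ 𝒞.C) (hZX : Z ⊆ X) (hco : ∀ d ∈ Z, ∀ e ∈ Z, co 𝒞 Z d e) :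
    Z ⊆ minE 𝒞 X := by
  intro e heZ
  refine ⟨hZX heZ, fun d hdX hlt => ?_⟩
  have hdZ : d ∈ Z := hlt.1 Z hZ hZX heZ
  exact (hco d hdZ e heZ).1 ⟨(le_agree h hX hZ hZX heZ).mpr hlt.1, hlt.2⟩

theorem minE_lc {𝒞 : CS E L} (h : IsStable 𝒞) {X A : Set E} (hX : X ∈ 𝒞.C)
    (hA : A ∈ 𝒞.C) (hAX : A ⊆ X) (hlc : LC 𝒞 X A) :
    minE 𝒞 A = minE 𝒞 X ∩ A := by
  apply Set.Subset.antisymm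
  · rintro m ⟨hmA, hmin⟩
    refine ⟨⟨hAX hmA, fun c hcX hlt => ?_⟩, hmA⟩
    have hcA : c ∈ A := hlc m hmA c hlt.1
    exact hmin c hcA ⟨(le_agree h hX hA hAX hmA).mpr hlt.1, hlt.2⟩
  · exact minE_inter_subset h hA hX hAX

def RevReach (𝒞 : CS E L) : Set E → Set E → Prop :=
  Relation.ReflTransGen (fun U V => ∃ a, RTrans 𝒞 a U V)

theorem reach_of_lc {𝒞 : CS E L} (h : IsStable 𝒞) :
    ∀ n (X A : Set E), X ∈ 𝒞.C → A ⊆ X → LC 𝒞 X A → (X \ A).ncard = n →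
      RevReach 𝒞 X A := by
  intro n
  induction n with
  | zero =>
    intro X A hX hAX hlc hn
    have hfin := (𝒞.finite X hX).subset (Set.diff_subset (t := A))
    have hempty : X \ A = ∅ := (Set.ncard_eq_zero hfin).1 hn
    have hXA : X = A := Set.Subset.antisymm (Set.diff_eq_empty.mp hempty) hAX
    rw [hXA]
    exact Relation.ReflTransGen.refl
  | succ n ih =>
    intro X A hX hAX hlc hn
    have hfinX := 𝒞.finite X hX
    have hne : (X \ A).Nonempty := Set.nonempty_of_ncard_ne_zero (by omega)
    obtain ⟨e, heXA, hemax⟩ := Set.exists_max_image (X \ A)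
      (fun c => (cone 𝒞 X c).ncard) (hfinX.subset Set.diff_subset) hne
    have hkey : ∀ c ∈ X, le 𝒞 X e c → e = c := by
      intro c hc hlec
      by_contra hne2
      have hsubc : cone 𝒞 X e ⊆ cone 𝒞 X c := fun z hz => le_trans' hz hlec
      have hstrict : c ∉ cone 𝒞 X e := fun hcc =>
        hne2 (le_antisym h hX heXA.1 hcc hlec).symm
      have hcA : c ∉ A := fun hcA => heXA.2 (hlc c hcA e hlec)
      have hlt : (cone 𝒞 X e).ncard < (cone 𝒞 X c).ncard :=
        Set.ncard_lt_ncard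
          (HasSubset.Subset.ssubset_of_ne hsubc
            (fun heq => hstrict (heq ▸ mem_cone_self 𝒞 X c)))
          (hfinX.subset (cone_subset hX hc))
      exact absurd (hemax c ⟨hc, hcA⟩) (not_le.mpr hlt)
    have hlcX' : LC 𝒞 X (X \ {e}) := by
      intro c hc d hled
      refine ⟨mem_of_le hX hc.1 hled, fun hde => ?_⟩
      have hde' : d = e := Set.mem_singleton_iff.mp hde
      subst hde'
      exact hc.2 (Set.mem_singleton_iff.mpr (hkey c hc.1 hled).symm)
    have hX'C : X \ {e} ∈ 𝒞.C := lc_mem h hX Set.diff_subset hlcX'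
    have hdiffe : X \ (X \ {e}) = {e} := by
      rw [Set.diff_diff_right_self, Set.inter_eq_self_of_subset_right
        (Set.singleton_subset_iff.2 heXA.1)]
    have hstep : ∃ a, RTrans 𝒞 a X (X \ {e}) :=
      ⟨𝒞.label e, hX'C, hX, Set.diff_subset, e, hdiffe, rfl⟩
    have hAsub : A ⊆ X \ {e} := fun x hx =>
      ⟨hAX hx, fun hxe => heXA.2 (Set.mem_singleton_iff.1 hxe ▸ hx)⟩
    have hlcA : LC 𝒞 (X \ {e}) A := by
      intro c hcA d hled
      exact hlc c hcA d ((le_agree h hX hX'C Set.diff_subset (hAsub hcA)).1 hled)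
    have hcard : ((X \ {e}) \ A).ncard = n := by
      have heq : (X \ {e}) \ A = (X \ A) \ {e} := by rw [Set.diff_diff_comm]
      rw [heq, Set.ncard_diff_singleton_of_mem heXA, hn]
      omega
    exact Relation.ReflTransGen.head hstep (ih (X \ {e}) A hX'C hAsub hlcA hcard)

section Bisim

variable {E₁ E₂ : Type u}

theorem rhsb_swap {𝒞 : CS E₁ L} {𝒟 : CS E₂ L} {R : Set E₁ → Set E₂ → Prop}
    (hR : IsRHSB 𝒞 𝒟 R) : IsRHSB 𝒟 𝒞 (fun Y X => R X Y) := by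
  obtain ⟨⟨h0, hdom⟩, hm⟩ := hR
  exact ⟨⟨h0, fun Y X hx => ⟨(hdom X Y hx).2, (hdom X Y hx).1⟩⟩,
    fun Y X hx => ⟨(hm X Y hx).2.1, (hm X Y hx).1, (hm X Y hx).2.2.2, (hm X Y hx).2.2.1⟩⟩

theorem hom_singleton (a : L) : Hom ({a} : Multiset L) := by
  intro x hx y hy
  simp only [Multiset.mem_singleton] at hx hy
  rw [hx, hy]

theorem rstep_singleton {𝒞 : CS E L} {a : L} {X X' : Set E} (h : RTrans 𝒞 a X X') :
    RStep 𝒞 {a} X X' := by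
  obtain ⟨hX', hX, hsub, e, hdiff, hlab⟩ := h
  refine ⟨hX', hX, hsub, {e}, ?_, ?_, ?_⟩
  · simpa using hdiff.symm
  · intro d hd e' he'
    simp only [Finset.mem_singleton] at hd he'
    rw [hd, he']
    exact ⟨not_lt_self e, not_lt_self e⟩
  · simp [hlab]

theorem eq_empty_of_R_empty {𝒞 : CS E₁ L} {𝒟 : CS E₂ L} {R : Set E₁ → Set E₂ → Prop}
    (h𝒟 : IsStable 𝒟) (hR : IsRHSB 𝒞 𝒟 R) {Y : Set E₂} (h : R ∅ Y) : Y = ∅ := by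
  by_contra hne
  have hY : Y ∈ 𝒟.C := (hR.1.2 ∅ Y h).2
  obtain ⟨f, hf, hfC⟩ := h𝒟.2.1 Y hY hne
  have hdiff : Y \ (Y \ {f}) = {f} := by
    rw [Set.diff_diff_right_self, Set.inter_eq_self_of_subset_right
      (Set.singleton_subset_iff.2 hf)]
  have hrt : RTrans 𝒟 (𝒟.label f) Y (Y \ {f}) :=
    ⟨hfC, hY, Set.diff_subset, f, hdiff, rfl⟩
  obtain ⟨X', hX', -⟩ := (hR.2 ∅ Y h).2.2.2 {𝒟.label f} (Y \ {f})
    (hom_singleton _) (rstep_singleton hrt)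
  obtain ⟨hX'C, -, hsub, F, hF, -, hmap⟩ := hX'
  have hFempty : F = ∅ := by
    have hc : (F : Set E₁) = ∅ := by
      rw [hF]
      exact Set.Subset.antisymm (fun x hx => absurd hx.1 (Set.notMem_empty x))
        (Set.empty_subset _)
    exact Finset.coe_eq_empty.1 hc
  rw [hFempty] at hmap
  simp at hmap

theorem transport {𝒞 : CS E₁ L} {𝒟 : CS E₂ L} {R : Set E₁ → Set E₂ → Prop}
    (hR : IsRHSB 𝒞 𝒟 R) {X S : Set E₁} {Y : Set E₂} (hxy : R X Y)
    (hre : RevReach 𝒞 X S) : ∃ Y₁, R S Y₁ ∧ Y₁ ⊆ Y := by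
  induction hre with
  | refl => exact ⟨Y, hxy, subset_rfl⟩
  | tail hVW hstep ih =>
    obtain ⟨Y₁, hRY₁, hY₁Y⟩ := ih
    obtain ⟨a, hrt⟩ := hstep
    obtain ⟨Y₂, hrs, hR2⟩ := (hR.2 _ _ hRY₁).2.2.1 {a} _ (hom_singleton a)
      (rstep_singleton hrt)
    exact ⟨Y₂, hR2, hrs.2.2.1.trans hY₁Y⟩

theorem count_le {𝒞 : CS E₁ L} {𝒟 : CS E₂ L} {R : Set E₁ → Set E₂ → Prop}
    (h𝒞 : IsStable 𝒞) (h𝒟 : IsStable 𝒟) (hR : IsRHSB 𝒞 𝒟 R) {X : Set E₁} {Y : Set E₂}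
    (hxy : R X Y) (a : L) :
    {e ∈ minE 𝒞 X | 𝒞.label e = a}.ncard ≤ {e ∈ minE 𝒟 Y | 𝒟.label e = a}.ncard := by
  classical
  have hX : X ∈ 𝒞.C := (hR.1.2 X Y hxy).1
  have hY : Y ∈ 𝒟.C := (hR.1.2 X Y hxy).2
  set S := {e ∈ minE 𝒞 X | 𝒞.label e = a} with hSdef
  have hSmin : S ⊆ minE 𝒞 X := fun x hx => hx.1
  have hSX : S ⊆ X := fun x hx => hx.1.1
  have hSfin : S.Finite := (𝒞.finite X hX).subset hSX
  have hSC : S ∈ 𝒞.C := subset_minE_mem h𝒞 hX hSmin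
  have hreach := reach_of_lc h𝒞 (X \ S).ncard X S hX hSX (lc_of_subset_minE hX hSmin) rfl
  obtain ⟨Y₁, hRS, hY₁Y⟩ := transport hR hxy hreach
  set F := hSfin.toFinset with hFdef
  set A := F.val.map 𝒞.label with hAdef
  have hFS : (F : Set E₁) = S := hSfin.coe_toFinset
  have hAa : ∀ x ∈ A, x = a := by
    intro x hx
    rw [hAdef] at hx
    obtain ⟨b, hbF, rfl⟩ := Multiset.mem_map.1 hx
    have hbS : b ∈ S := by rw [← hFS]; exact Finset.mem_coe.mpr (Finset.mem_val.mp hbF)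
    exact hbS.2
  have hhom : Hom A := fun x hx y hy => (hAa x hx).trans (hAa y hy).symm
  have hrstep : RStep 𝒞 A S ∅ := by
    refine ⟨h𝒞.1, hSC, Set.empty_subset _, F, by rw [hFS]; simp, ?_, rfl⟩
    intro d hd e he
    have hdS : d ∈ S := by rw [← hFS]; exact Finset.mem_coe.mpr hd
    have heS : e ∈ S := by rw [← hFS]; exact Finset.mem_coe.mpr he
    constructor
    · intro hlt
      exact (hSmin heS).2 d (hSX hdS)
        ⟨(le_agree h𝒞 hX hSC hSX heS).1 hlt.1, hlt.2⟩
    · intro hlt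
      exact (hSmin hdS).2 e (hSX heS)
        ⟨(le_agree h𝒞 hX hSC hSX hdS).1 hlt.1, hlt.2⟩
  obtain ⟨Y₂, hrs2, hRe⟩ := (hR.2 S Y₁ hRS).2.2.1 A ∅ hhom hrstep
  have hY₂ : Y₂ = ∅ := eq_empty_of_R_empty h𝒟 hR hRe
  rw [hY₂] at hrs2
  obtain ⟨-, hY₁C, -, F', hF', hco', hmap'⟩ := hrs2
  have hF'Y₁ : (F' : Set E₂) = Y₁ := by rw [hF']; simp
  have hsubmin : Y₁ ⊆ minE 𝒟 Y := by
    refine subset_minE_of_co h𝒟 hY hY₁C hY₁Y ?_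
    intro d hd e he
    refine hco' d ?_ e ?_
    · rwa [← Finset.mem_coe, hF'Y₁]
    · rwa [← Finset.mem_coe, hF'Y₁]
  have hY₁lab : ∀ y ∈ Y₁, 𝒟.label y = a := by
    intro y hy
    have hyF : y ∈ F' := by rwa [← Finset.mem_coe, hF'Y₁]
    have hmem : 𝒟.label y ∈ A := by
      rw [← hmap']
      exact Multiset.mem_map_of_mem _ (Finset.mem_val.mpr hyF)
    exact hAa _ hmem
  have hY₁T : Y₁ ⊆ {e ∈ minE 𝒟 Y | 𝒟.label e = a} := fun y hy => ⟨hsubmin hy, hY₁lab y hy⟩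
  have hcards : S.ncard = Y₁.ncard := by
    have h1 : S.ncard = F.card := by rw [← hFS, Set.ncard_coe_finset]
    have h2 : Y₁.ncard = F'.card := by rw [← hF'Y₁, Set.ncard_coe_finset]
    have h3 : Multiset.card A = F.card := by rw [hAdef, Multiset.card_map]; rfl
    have h4 : Multiset.card A = F'.card := by rw [← hmap', Multiset.card_map]; rfl
    omega
  calc S.ncard = Y₁.ncard := hcards
    _ ≤ _ := Set.ncard_le_ncard hY₁T ((𝒟.finite Y hY).subset (fun x hx => hx.1.1))

theorem count_eq {𝒞 : CS E₁ L} {𝒟 : CS E₂ L} {R : Set E₁ → Set E₂ → Prop}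
    (h𝒞 : IsStable 𝒞) (h𝒟 : IsStable 𝒟) (hR : IsRHSB 𝒞 𝒟 R) {X : Set E₁} {Y : Set E₂}
    (hxy : R X Y) (a : L) :
    {e ∈ minE 𝒞 X | 𝒞.label e = a}.ncard = {e ∈ minE 𝒟 Y | 𝒟.label e = a}.ncard :=
  Nat.le_antisymm (count_le h𝒞 h𝒟 hR hxy a) (count_le h𝒟 h𝒞 (rhsb_swap hR) hxy a)

end Bisim

theorem le_of_lift_le {𝒞 : CS E L} (h : IsStable 𝒞) {M X : Set E} (hM : M ∈ 𝒞.C)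
    (hMmin : minE 𝒞 M = M) (hX : X ∈ 𝒞.C) (hXmin : minE 𝒞 X = M) {d e : E}
    (he : e ∈ X \ M) (hle : le (lift 𝒞 M) (X \ M) d e) : le 𝒞 X d e := by
  have hMX : M ⊆ X := by rw [← hXmin]; exact fun x hx => hx.1
  have hconeC := cone_mem h hX he.1
  have hconesub := cone_subset hX he.1
  have hUX : cone 𝒞 X e ∪ M ⊆ X := Set.union_subset hconesub hMX
  have hUC : cone 𝒞 X e ∪ M ∈ 𝒞.C := h.2.2.1 _ hconeC _ hM X hX hUX
  have hUlc : LC 𝒞 X (cone 𝒞 X e ∪ M) := by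
    intro c hc d' hd'
    rcases hc with hc | hc
    · exact Or.inl (le_trans' hd' hc)
    · rcases eq_or_ne d' c with rfl | hne
      · exact Or.inr hc
      · have hcmin : c ∈ minE 𝒞 X := by rw [hXmin]; exact hc
        exact absurd (show lt 𝒞 X d' c from ⟨hd', hne⟩)
          (hcmin.2 d' (mem_of_le hX hcmin.1 hd'))
  have hUmin : minE 𝒞 (cone 𝒞 X e ∪ M) = minE 𝒞 M := by
    rw [hMmin, minE_lc h hX hUC hUX hUlc, hXmin]
    exact Set.inter_eq_left.mpr Set.subset_union_right
  have hW₀ : (cone 𝒞 X e ∪ M) \ M ∈ (lift 𝒞 M).C :=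
    ⟨_, hUC, Set.subset_union_right, hUmin, rfl⟩
  have hdW₀ := hle _ hW₀ (Set.diff_subset_diff_left hUX)
    ⟨Or.inl (mem_cone_self 𝒞 X e), he.2⟩
  exact hdW₀.1.resolve_right hdW₀.2

theorem lift_le_of_le {𝒞 : CS E L} {M X : Set E} (hMX : M ⊆ X) {d e : E}
    (hd : d ∉ M) (hle : le 𝒞 X d e) : le (lift 𝒞 M) (X \ M) d e := by
  rintro W hW hWZ heW
  obtain ⟨X₁, hX₁C, hMX₁, -, rfl⟩ := hW
  have hX₁X : X₁ ⊆ X := by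
    intro x hx
    by_cases hxM : x ∈ M
    · exact hMX hxM
    · exact (hWZ ⟨hx, hxM⟩).1
  exact ⟨hle X₁ hX₁C hX₁X heW.1, hd⟩

theorem co_lift_iff {𝒞 : CS E L} (h : IsStable 𝒞) {M X : Set E} (hM : M ∈ 𝒞.C)
    (hMmin : minE 𝒞 M = M) (hX : X ∈ 𝒞.C) (hXmin : minE 𝒞 X = M) {d e : E}
    (hd : d ∈ X \ M) (he : e ∈ X \ M) :
    co (lift 𝒞 M) (X \ M) d e ↔ co 𝒞 X d e := by
  have hMX : M ⊆ X := by rw [← hXmin]; exact fun x hx => hx.1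
  constructor
  · rintro ⟨h1, h2⟩
    exact ⟨fun hlt => h1 ⟨lift_le_of_le hMX hd.2 hlt.1, hlt.2⟩,
           fun hlt => h2 ⟨lift_le_of_le hMX he.2 hlt.1, hlt.2⟩⟩
  · rintro ⟨h1, h2⟩
    exact ⟨fun hlt => h1 ⟨le_of_lift_le h hM hMmin hX hXmin he hlt.1, hlt.2⟩,
           fun hlt => h2 ⟨le_of_lift_le h hM hMmin hX hXmin hd hlt.1, hlt.2⟩⟩

section Halves

variable {E₁ E₂ : Type u}

/-- The lifted relation. -/
abbrev RL (𝒞 : CS E₁ L) (𝒟 : CS E₂ L) (R : Set E₁ → Set E₂ → Prop)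
    (M : Set E₁) (N : Set E₂) : Set E₁ → Set E₂ → Prop :=
  fun Z W => ∃ X Y, R X Y ∧ minE 𝒞 X = M ∧ minE 𝒟 Y = N ∧ Z = X \ M ∧ W = Y \ N

theorem fwd_half {𝒞 : CS E₁ L} {𝒟 : CS E₂ L} {R : Set E₁ → Set E₂ → Prop}
    (h𝒞 : IsStable 𝒞) (h𝒟 : IsStable 𝒟) (hR : IsRHSB 𝒞 𝒟 R)
    {M : Set E₁} (hM : M ∈ 𝒞.C) (hMmin : minE 𝒞 M = M)
    {N : Set E₂} (hN : N ∈ 𝒟.C) (hNmin : minE 𝒟 N = N) :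
    ∀ Z W, RL 𝒞 𝒟 R M N Z W → ∀ a Z', FTrans (lift 𝒞 M) a Z Z' →
      ∃ W', FTrans (lift 𝒟 N) a W W' ∧ RL 𝒞 𝒟 R M N Z' W' := by
  rintro Z W ⟨X, Y, hXY, hXmin, hYmin, rfl, rfl⟩ a Z' ⟨-, hZ'm, hsub, e, hdiff, hlab⟩
  obtain ⟨X₂, hX₂C, hMX₂, hX₂min', rfl⟩ := hZ'm
  have hX₂min : minE 𝒞 X₂ = M := by rw [hX₂min', hMmin]
  have hXC : X ∈ 𝒞.C := (hR.1.2 X Y hXY).1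
  have hYC : Y ∈ 𝒟.C := (hR.1.2 X Y hXY).2
  have hMX : M ⊆ X := by rw [← hXmin]; exact fun x hx => hx.1
  have hNY : N ⊆ Y := by rw [← hYmin]; exact fun x hx => hx.1
  have heZ' : e ∈ (X₂ \ M) \ (X \ M) := by rw [hdiff]; rfl
  have heM : e ∉ M := heZ'.1.2
  have heX : e ∉ X := fun hx => heZ'.2 ⟨hx, heM⟩
  have heX₂ : e ∈ X₂ := heZ'.1.1
  have hXX₂ : X ⊆ X₂ := by
    intro x hx
    by_cases hxM : x ∈ M
    · exact hMX₂ hxM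
    · exact (hsub ⟨hx, hxM⟩).1
  have hX₂eq : X₂ = X ∪ {e} := by
    apply Set.Subset.antisymm
    · intro x hx
      by_cases hxM : x ∈ M
      · exact Or.inl (hMX hxM)
      by_cases hxX : x ∈ X
      · exact Or.inl hxX
      · right
        have hmem : x ∈ (X₂ \ M) \ (X \ M) := ⟨⟨hx, hxM⟩, fun hc => hxX hc.1⟩
        rw [hdiff] at hmem
        exact hmem
    · exact Set.union_subset hXX₂ (Set.singleton_subset_iff.mpr heX₂)
  have hX₂diff : X₂ \ X = {e} := by
    rw [hX₂eq]
    ext x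
    simp only [Set.mem_diff, Set.mem_union, Set.mem_singleton_iff]
    constructor
    · rintro ⟨h1 | h1, hn⟩
      · exact absurd h1 hn
      · exact h1
    · rintro rfl
      exact ⟨Or.inr rfl, heX⟩
  have hft : FTrans 𝒞 a X X₂ := ⟨hXC, hX₂C, hXX₂, e, hX₂diff, hlab⟩
  obtain ⟨Y₂, hftY, hXY₂⟩ := (hR.2 X Y hXY).1 a X₂ hft
  obtain ⟨-, hY₂C, hYY₂, e', hdiffY, hlabY⟩ := hftY
  have he'mem : e' ∈ Y₂ \ Y := by rw [hdiffY]; rfl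
  have he'Y : e' ∉ Y := he'mem.2
  have hY₂eq : Y₂ = Y ∪ {e'} := by
    apply Set.Subset.antisymm
    · intro x hx
      by_cases hxY : x ∈ Y
      · exact Or.inl hxY
      · right
        have hmem : x ∈ Y₂ \ Y := ⟨hx, hxY⟩
        rw [hdiffY] at hmem
        exact hmem
    · exact Set.union_subset hYY₂ (Set.singleton_subset_iff.mpr he'mem.1)
  have hNmin₂ : N ⊆ minE 𝒟 Y₂ := by rw [← hYmin]; exact minE_mono hYC hYY₂
  have hminsub : minE 𝒟 Y₂ ⊆ N ∪ {e'} := by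
    intro m hm
    have hmY₂ : m ∈ Y₂ := hm.1
    rw [hY₂eq] at hmY₂
    rcases hmY₂ with hmY | hmE
    · exact Or.inl (by
        rw [← hYmin]
        exact minE_inter_subset h𝒟 hYC hY₂C hYY₂ ⟨hm, hmY⟩)
    · exact Or.inr hmE
  have he'notmin : e' ∉ minE 𝒟 Y₂ := by
    intro he'min
    set a' := 𝒟.label e' with ha'
    have c1 := count_eq h𝒞 h𝒟 hR hXY a'
    have c2 := count_eq h𝒞 h𝒟 hR hXY₂ a'
    rw [hXmin, hYmin] at c1
    rw [hX₂min] at c2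
    have hTsub : insert e' {x ∈ N | 𝒟.label x = a'} ⊆ {x ∈ minE 𝒟 Y₂ | 𝒟.label x = a'} := by
      intro x hx
      rcases Set.mem_insert_iff.mp hx with rfl | hx
      · exact ⟨he'min, rfl⟩
      · exact ⟨hNmin₂ hx.1, hx.2⟩
    have hfinN : {x ∈ N | 𝒟.label x = a'}.Finite :=
      (𝒟.finite N hN).subset (fun x hx => hx.1)
    have hfinY₂ : {x ∈ minE 𝒟 Y₂ | 𝒟.label x = a'}.Finite :=
      (𝒟.finite Y₂ hY₂C).subset (fun x hx => hx.1.1)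
    have hcard := Set.ncard_le_ncard hTsub hfinY₂
    rw [Set.ncard_insert_of_notMem (fun hc => he'Y (hNY hc.1)) hfinN] at hcard
    omega
  have hY₂min : minE 𝒟 Y₂ = N := by
    apply Set.Subset.antisymm _ hNmin₂
    intro m hm
    rcases hminsub hm with hmN | hmE
    · exact hmN
    · rw [Set.mem_singleton_iff] at hmE
      rw [hmE] at hm
      exact absurd hm he'notmin
  have hdiffW : (Y₂ \ N) \ (Y \ N) = {e'} := by
    ext x
    simp only [Set.mem_diff, Set.mem_singleton_iff]
    constructor
    · rintro ⟨⟨hxY₂, hxN⟩, hn⟩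
      have hxY : x ∉ Y := fun hc => hn ⟨hc, hxN⟩
      have hmem : x ∈ Y₂ \ Y := ⟨hxY₂, hxY⟩
      rw [hdiffY] at hmem
      exact hmem
    · rintro rfl
      exact ⟨⟨he'mem.1, fun hc => he'Y (hNY hc)⟩, fun hc => he'Y hc.1⟩
  exact ⟨Y₂ \ N,
    ⟨⟨Y, hYC, hNY, by rw [hYmin, hNmin], rfl⟩,
     ⟨Y₂, hY₂C, hNY.trans hYY₂, by rw [hY₂min, hNmin], rfl⟩,
     Set.diff_subset_diff_left hYY₂, e', hdiffW, hlabY⟩,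
    X₂, Y₂, hXY₂, hX₂min, hY₂min, rfl, rfl⟩

theorem rev_half {𝒞 : CS E₁ L} {𝒟 : CS E₂ L} {R : Set E₁ → Set E₂ → Prop}
    (h𝒞 : IsStable 𝒞) (h𝒟 : IsStable 𝒟) (hR : IsRHSB 𝒞 𝒟 R)
    {M : Set E₁} (hM : M ∈ 𝒞.C) (hMmin : minE 𝒞 M = M)
    {N : Set E₂} (hN : N ∈ 𝒟.C) (hNmin : minE 𝒟 N = N) :
    ∀ Z W, RL 𝒞 𝒟 R M N Z W → ∀ A Z', Hom A → RStep (lift 𝒞 M) A Z Z' →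
      ∃ W', RStep (lift 𝒟 N) A W W' ∧ RL 𝒞 𝒟 R M N Z' W' := by
  rintro Z W ⟨X, Y, hXY, hXmin, hYmin, rfl, rfl⟩ A Z' hhom ⟨hZ'm, -, hsub, F, hF, hco, hmap⟩
  obtain ⟨X₂, hX₂C, hMX₂, hX₂min', rfl⟩ := hZ'm
  have hX₂min : minE 𝒞 X₂ = M := by rw [hX₂min', hMmin]
  have hXC : X ∈ 𝒞.C := (hR.1.2 X Y hXY).1
  have hYC : Y ∈ 𝒟.C := (hR.1.2 X Y hXY).2
  have hMX : M ⊆ X := by rw [← hXmin]; exact fun x hx => hx.1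
  have hNY : N ⊆ Y := by rw [← hYmin]; exact fun x hx => hx.1
  have hX₂X : X₂ ⊆ X := by
    intro x hx
    by_cases hxM : x ∈ M
    · exact hMX hxM
    · exact (hsub ⟨hx, hxM⟩).1
  have hdiffeq : X \ X₂ = (X \ M) \ (X₂ \ M) := by
    ext x
    simp only [Set.mem_diff]
    constructor
    · rintro ⟨hxX, hxX₂⟩
      exact ⟨⟨hxX, fun hc => hxX₂ (hMX₂ hc)⟩, fun hc => hxX₂ hc.1⟩
    · rintro ⟨⟨hxX, hxM⟩, hn⟩
      exact ⟨hxX, fun hc => hn ⟨hc, hxM⟩⟩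
  have hstepC : RStep 𝒞 A X X₂ := by
    refine ⟨hX₂C, hXC, hX₂X, F, by rw [hF]; exact hdiffeq.symm, ?_, hmap⟩
    intro d hd e he
    have hdZ : d ∈ (X \ M) \ (X₂ \ M) := by rw [← hF]; exact Finset.mem_coe.mpr hd
    have heZ : e ∈ (X \ M) \ (X₂ \ M) := by rw [← hF]; exact Finset.mem_coe.mpr he
    exact (co_lift_iff h𝒞 hM hMmin hXC hXmin hdZ.1 heZ.1).1 (hco d hd e he)
  obtain ⟨Y₂, hrsD, hXY₂⟩ := (hR.2 X Y hXY).2.2.1 A X₂ hhom hstepC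
  obtain ⟨hY₂C, -, hY₂Y, F', hF', hco', hmap'⟩ := hrsD
  have hY₂minEq : minE 𝒟 Y₂ = minE 𝒟 Y ∩ Y₂ := minE_subcfg h𝒟 hYC hY₂C hY₂Y
  have hNY₂ : N ⊆ Y₂ := by
    intro m hmN
    set a' := 𝒟.label m with ha'
    have c1 := count_eq h𝒞 h𝒟 hR hXY a'
    have c2 := count_eq h𝒞 h𝒟 hR hXY₂ a'
    rw [hXmin, hYmin] at c1
    rw [hX₂min] at c2
    have hfinN : {x ∈ N | 𝒟.label x = a'}.Finite :=
      (𝒟.finite N hN).subset (fun x hx => hx.1)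
    have hsubT : {x ∈ minE 𝒟 Y₂ | 𝒟.label x = a'} ⊆ {x ∈ N | 𝒟.label x = a'} := by
      intro x hx
      have hx1 : x ∈ minE 𝒟 Y ∩ Y₂ := by rw [← hY₂minEq]; exact hx.1
      exact ⟨by rw [← hYmin]; exact hx1.1, hx.2⟩
    have heq : {x ∈ minE 𝒟 Y₂ | 𝒟.label x = a'} = {x ∈ N | 𝒟.label x = a'} :=
      Set.eq_of_subset_of_ncard_le hsubT (by omega) hfinN
    have hmem : m ∈ {x ∈ minE 𝒟 Y₂ | 𝒟.label x = a'} := by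
      rw [heq]; exact ⟨hmN, rfl⟩
    exact hmem.1.1
  have hY₂min : minE 𝒟 Y₂ = N := by
    rw [hY₂minEq, hYmin]
    exact Set.inter_eq_left.mpr hNY₂
  have hWmem : Y \ N ∈ (lift 𝒟 N).C := ⟨Y, hYC, hNY, by rw [hYmin, hNmin], rfl⟩
  have hW'mem : Y₂ \ N ∈ (lift 𝒟 N).C := ⟨Y₂, hY₂C, hNY₂, by rw [hY₂min, hNmin], rfl⟩
  have hdiffD : Y \ Y₂ = (Y \ N) \ (Y₂ \ N) := by
    ext x
    simp only [Set.mem_diff]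
    constructor
    · rintro ⟨hxY, hxY₂⟩
      exact ⟨⟨hxY, fun hc => hxY₂ (hNY₂ hc)⟩, fun hc => hxY₂ hc.1⟩
    · rintro ⟨⟨hxY, hxN⟩, hn⟩
      exact ⟨hxY, fun hc => hn ⟨hc, hxN⟩⟩
  refine ⟨Y₂ \ N,
    ⟨hW'mem, hWmem, Set.diff_subset_diff_left hY₂Y, F',
      by rw [hF']; exact hdiffD, ?_, hmap'⟩,
    X₂, Y₂, hXY₂, hX₂min, hY₂min, rfl, rfl⟩
  intro d hd e he
  have hdY : d ∈ Y \ Y₂ := by rw [← hF']; exact Finset.mem_coe.mpr hd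
  have heY : e ∈ Y \ Y₂ := by rw [← hF']; exact Finset.mem_coe.mpr he
  have hdYN : d ∈ Y \ N := ⟨hdY.1, fun hc => hdY.2 (hNY₂ hc)⟩
  have heYN : e ∈ Y \ N := ⟨heY.1, fun hc => heY.2 (hNY₂ hc)⟩
  exact (co_lift_iff h𝒟 hN hNmin hYC hYmin hdYN heYN).2 (hco' d hd e he)

end Halves

end Stmt6Aux

/-- the lifting of a reverse homogeneous step bisimulation by
related configurations of minimal events is an RHSB between the liftings. -/
theorem stmt6 {E₁ E₂ : Type u} {L : Type v} (𝒞 : CS E₁ L) (𝒟 : CS E₂ L)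
    (h𝒞 : IsStable 𝒞) (h𝒟 : IsStable 𝒟)
    (R : Set E₁ → Set E₂ → Prop) (hR : IsRHSB 𝒞 𝒟 R)
    (M : Set E₁) (hM : M ∈ 𝒞.C) (hMmin : minE 𝒞 M = M)
    (N : Set E₂) (hN : N ∈ 𝒟.C) (hNmin : minE 𝒟 N = N)
    (hMN : R M N) :
    IsRHSB (lift 𝒞 M) (lift 𝒟 N)
      (fun Z W => ∃ X Y, R X Y ∧ minE 𝒞 X = M ∧ minE 𝒟 Y = N ∧
        Z = X \ M ∧ W = Y \ N) := by
  refine ⟨⟨⟨M, N, hMN, hMmin, hNmin, Set.diff_self.symm, Set.diff_self.symm⟩, ?_⟩, ?_⟩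
  · rintro Z W ⟨X, Y, hXY, hXmin, hYmin, rfl, rfl⟩
    exact ⟨⟨X, (hR.1.2 X Y hXY).1, by rw [← hXmin]; exact fun x hx => hx.1,
        by rw [hXmin, hMmin], rfl⟩,
      ⟨Y, (hR.1.2 X Y hXY).2, by rw [← hYmin]; exact fun x hx => hx.1,
        by rw [hYmin, hNmin], rfl⟩⟩
  · intro Z W hZW
    refine ⟨Stmt6Aux.fwd_half h𝒞 h𝒟 hR hM hMmin hN hNmin Z W hZW, ?_,
      Stmt6Aux.rev_half h𝒞 h𝒟 hR hM hMmin hN hNmin Z W hZW, ?_⟩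
    · intro a W' hft
      have hZW' : Stmt6Aux.RL 𝒟 𝒞 (fun Y X => R X Y) N M W Z := by
        obtain ⟨X, Y, h1, h2, h3, h4, h5⟩ := hZW
        exact ⟨Y, X, h1, h3, h2, h5, h4⟩
      obtain ⟨Z', hft', Y', X', h1, h2, h3, h4, h5⟩ :=
        Stmt6Aux.fwd_half h𝒟 h𝒞 (Stmt6Aux.rhsb_swap hR) hN hNmin hM hMmin W Z hZW' a W' hft
      exact ⟨Z', hft', X', Y', h1, h3, h2, h5, h4⟩
    · intro A W' hhom hrs
      have hZW' : Stmt6Aux.RL 𝒟 𝒞 (fun Y X => R X Y) N M W Z := by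
        obtain ⟨X, Y, h1, h2, h3, h4, h5⟩ := hZW
        exact ⟨Y, X, h1, h3, h2, h5, h4⟩
      obtain ⟨Z', hrs', Y', X', h1, h2, h3, h4, h5⟩ :=
        Stmt6Aux.rev_half h𝒟 h𝒞 (Stmt6Aux.rhsb_swap hR) hN hNmin hM hMmin W Z hZW' A W' hhom hrs
      exact ⟨Z', hrs', X', Y', h1, h3, h2, h5, h4⟩
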